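/- Let k be a field of characteristic 0, F ∈ k[X_0,…,X_n] homogeneous of degree m ≥ 2 defining a smooth hypersurface, with F_i = ∂F/∂X_i and F_{ij} = ∂F_i/∂X_j. In the ring J̃ = k[Y_0,X_0,…,X_n]/(Y_0F, Y_0X_0F_0,…, Y_0X_nF_n), for any 0 ≤ k ≤ n and any subset {j_0,…,j_r} ⊂ {0,…,n} of cardinality r+1, one has Y_0^{n+1}·det(Hess(F))_{j_0,…,j_r}·∏_{i ∉ {j_0,…,j_r}} X_i·∏_{i ∈ {j_0,…,j_r}} F_i = Y_0^{n+1}·(det(Hess(F))/(m−1)^{r+1})·∏_{i=0}^n X_i, where det(Hess(F))_{j_0,…,j_r} is the minor of the Hessian matrix (F_{ij}) with rows and columns j_0,…,j_r removed. -/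

import Mathlib

set_option linter.unusedSectionVars false
set_option maxHeartbeats 1000000

open MvPolynomial

section helpers
variable {σ : Type*} [Fintype σ] [DecidableEq σ] {K : Type*} [CommRing K]

lemma pderiv_comm' (i l : σ) (p : MvPolynomial σ K) :
    pderiv i (pderiv l p) = pderiv l (pderiv i p) := by
  induction p using MvPolynomial.induction_on' with
  | add p q hp hq => simp [hp, hq]
  | monomial s a =>
    rcases eq_or_ne i l with rfl | h
    · rfl
    · simp only [pderiv_monomial]
      congr 1
      · rw [tsub_tsub, tsub_tsub, add_comm]
      · rw [Finsupp.tsub_apply, Finsupp.tsub_apply, Finsupp.single_apply,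
          Finsupp.single_apply, if_neg h, if_neg (Ne.symm h)]
        simp only [Nat.sub_zero]
        ring

lemma euler_identity {p : MvPolynomial σ K} {d : ℕ} (h : p.IsHomogeneous d) :
    ∑ l, X l * pderiv l p = d • p := by
  calc ∑ l, X l * pderiv l p
      = ∑ l, X l * pderiv l (∑ v ∈ p.support, monomial v (coeff v p)) := by
        rw [← as_sum]
    _ = ∑ v ∈ p.support, ∑ l, X l * pderiv l (monomial v (coeff v p)) := by
        simp_rw [map_sum, Finset.mul_sum]
        rw [Finset.sum_comm]
    _ = ∑ v ∈ p.support, d • monomial v (coeff v p) := by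
        refine Finset.sum_congr rfl fun v hv => ?_
        have hdeg : ∑ l : σ, v l = d := by
          have h1 : (Finsupp.weight 1) v = d := h (mem_support_iff.mp hv)
          rw [← h1]
          rw [Finsupp.weight_apply, Finsupp.sum]
          rw [Finset.sum_subset (Finset.subset_univ v.support)]
          · simp
          · intro x _ hx
            simp [Finsupp.notMem_support_iff.mp hx]
        calc ∑ l, X l * pderiv l (monomial v (coeff v p))
            = ∑ l, monomial v (coeff v p * v l) := by
              refine Finset.sum_congr rfl fun l _ => ?_
              rw [pderiv_monomial]
              rcases Nat.eq_zero_or_pos (v l) with h0 | h0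
              · simp [h0]
              · have hle : Finsupp.single l 1 ≤ v := by
                  rwa [Finsupp.single_le_iff]
                rw [X, monomial_mul, one_mul, add_tsub_cancel_of_le hle]
          _ = d • monomial v (coeff v p) := by
              rw [← map_sum, ← Finset.mul_sum, ← Nat.cast_sum, hdeg,
                smul_monomial, nsmul_eq_mul, mul_comm]
    _ = d • p := by rw [← Finset.smul_sum, ← as_sum]

lemma euler_hess_row {p : MvPolynomial σ K} {d : ℕ} (hd : 1 ≤ d) (h : p.IsHomogeneous d)
    (i : σ) :
    ∑ l, X l * pderiv l (pderiv i p) = (d - 1) • pderiv i p := by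
  have h2 := congrArg (pderiv i) (euler_identity h)
  rw [map_sum, map_nsmul] at h2
  have h3 : ∀ l, pderiv i (X l * pderiv l p)
      = (if l = i then pderiv l p else 0) + X l * pderiv l (pderiv i p) := by
    intro l
    rw [pderiv_mul, pderiv_comm' i l]
    congr 1
    rcases eq_or_ne l i with rfl | hne
    · simp
    · rw [if_neg hne, pderiv_X_of_ne hne, zero_mul]
  simp_rw [h3, Finset.sum_add_distrib, Finset.sum_ite_eq' Finset.univ i
    (fun l => pderiv l p), if_pos (Finset.mem_univ i)] at h2
  have hd1 : d - 1 + 1 = d := Nat.succ_pred_eq_of_pos hd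
  rw [← hd1, succ_nsmul, add_comm (pderiv i p)] at h2
  exact add_right_cancel h2

lemma det_single_col {R : Type*} [CommRing R] {ι : Type*} [DecidableEq ι] [Fintype ι]
    (M : Matrix ι ι R) (j : ι) :
    (M.updateCol j (Pi.single j 1)).det =
      (M.submatrix (fun i : {i : ι // i ≠ j} => (i : ι))
        (fun i : {i : ι // i ≠ j} => (i : ι))).det := by
  classical
  let e : {i : ι // i ≠ j} ⊕ {i : ι // ¬ i ≠ j} ≃ ι := Equiv.sumCompl _
  rw [← Matrix.det_submatrix_equiv_self e]
  have he : (M.updateCol j (Pi.single j 1)).submatrix e e =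
      Matrix.fromBlocks
        (M.submatrix (fun i : {i : ι // i ≠ j} => (i : ι)) (fun i : {i : ι // i ≠ j} => (i : ι)))
        0
        (Matrix.of fun (_ : {i : ι // ¬ i ≠ j}) (l : {i : ι // i ≠ j}) => M j (l : ι))
        1 := by
    ext i l
    cases i with
    | inl i =>
      cases l with
      | inl l =>
        simp only [Matrix.submatrix_apply, Matrix.fromBlocks_apply₁₁, Matrix.submatrix_apply]
        show (M.updateCol j (Pi.single j 1)) (i : ι) (l : ι) = M (i : ι) (l : ι)
        rw [Matrix.updateCol_apply, if_neg l.prop]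
      | inr l =>
        have hl : (l : ι) = j := not_not.mp l.prop
        simp only [Matrix.submatrix_apply, Matrix.fromBlocks_apply₁₂, Matrix.zero_apply]
        show (M.updateCol j (Pi.single j 1)) (i : ι) (e (Sum.inr l)) = 0
        have : e (Sum.inr l) = (l : ι) := rfl
        rw [this, hl, Matrix.updateCol_apply, if_pos rfl, Pi.single_apply, if_neg i.prop]
    | inr i =>
      have hi : (i : ι) = j := not_not.mp i.prop
      cases l with
      | inl l =>
        simp only [Matrix.submatrix_apply, Matrix.fromBlocks_apply₂₁, Matrix.of_apply]
        show (M.updateCol j (Pi.single j 1)) (i : ι) (l : ι) = M j (l : ι)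
        rw [Matrix.updateCol_apply, if_neg l.prop, hi]
      | inr l =>
        have hl : (l : ι) = j := not_not.mp l.prop
        have hil : i = l := Subtype.ext (hi.trans hl.symm)
        simp only [Matrix.submatrix_apply, Matrix.fromBlocks_apply₂₂]
        show (M.updateCol j (Pi.single j 1)) (i : ι) (l : ι) = (1 : Matrix _ _ R) i l
        rw [Matrix.updateCol_apply, hl, if_pos rfl, hi, Pi.single_apply, if_pos rfl,
          Matrix.one_apply, if_pos hil]
  rw [he, Matrix.det_fromBlocks_zero₁₂, Matrix.det_one, mul_one]

end helpers

namespace HessianRing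

variable {k : Type*} [Field k]

/-- The variable `Y_0`. -/
noncomputable def Y0 (n : ℕ) (k : Type*) [Field k] :
    MvPolynomial (Unit ⊕ Fin (n + 1)) k := X (Sum.inl ())

/-- The variable `X_j`. -/
noncomputable def Xb (n : ℕ) (k : Type*) [Field k] (j : Fin (n + 1)) :
    MvPolynomial (Unit ⊕ Fin (n + 1)) k := X (Sum.inr j)

/-- The inclusion `k[X_0,…,X_n] → k[Y_0,X_0,…,X_n]`. -/
noncomputable def ρ (n : ℕ) (k : Type*) [Field k] :
    MvPolynomial (Fin (n + 1)) k →ₐ[k] MvPolynomial (Unit ⊕ Fin (n + 1)) k :=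
  rename Sum.inr

/-- The ideal `(Y_0F, Y_0X_0F_0, …, Y_0X_nF_n)` defining
`J̃ = k[Y_0,X_0,…,X_n]/(Y_0F, Y_0X_0F_0,…,Y_0X_nF_n)`. -/
noncomputable def JtildeIdeal (n : ℕ) {k : Type*} [Field k]
    (F : MvPolynomial (Fin (n + 1)) k) : Ideal (MvPolynomial (Unit ⊕ Fin (n + 1)) k) :=
  Ideal.span ({Y0 n k * ρ n k F} ∪
    Set.range (fun i : Fin (n + 1) => Y0 n k * Xb n k i * ρ n k (pderiv i F)))

/-- The Hessian matrix `(∂²F/∂X_i∂X_j)` of `F`. -/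
noncomputable def hess (n : ℕ) {k : Type*} [Field k] (F : MvPolynomial (Fin (n + 1)) k) :
    Matrix (Fin (n + 1)) (Fin (n + 1)) (MvPolynomial (Fin (n + 1)) k) :=
  Matrix.of fun i j => pderiv j (pderiv i F)

/-- The Hessian restricted to rows and columns in `T`. -/
noncomputable def Asub (n : ℕ) {k : Type*} [Field k] (F : MvPolynomial (Fin (n + 1)) k)
    (T : Finset (Fin (n + 1))) :
    Matrix {x // x ∈ T} {x // x ∈ T} (MvPolynomial (Fin (n + 1)) k) :=
  (hess n F).submatrix (fun p => (p : Fin (n + 1))) (fun p => (p : Fin (n + 1)))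

lemma gen_mem (n : ℕ) (F : MvPolynomial (Fin (n + 1)) k) (l : Fin (n + 1))
    (c : MvPolynomial (Unit ⊕ Fin (n + 1)) k) :
    Y0 n k * Xb n k l * ρ n k (pderiv l F) * c ∈ JtildeIdeal n F :=
  Ideal.mul_mem_right _ _ (Ideal.subset_span (Set.mem_union_right _ ⟨l, rfl⟩))

section step
variable (n m : ℕ) (F : MvPolynomial (Fin (n + 1)) k)

set_option maxHeartbeats 2000000 in
set_option synthInstance.maxHeartbeats 400000 in
/-- determinant reduction in the quotient ring -/
lemma quot_det_step (T : Finset (Fin (n + 1))) {j : Fin (n + 1)} (hj : j ∈ T) :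
    Ideal.Quotient.mk (JtildeIdeal n F)
      (Y0 n k ^ (n + 1) *
        ρ n k ((Asub n F T).updateCol ⟨j, hj⟩
          (fun i => pderiv (i : Fin (n + 1)) F)).det *
        (∏ i ∈ T.erase j, Xb n k i) * ∏ i ∈ Tᶜ, ρ n k (pderiv i F))
  = Ideal.Quotient.mk (JtildeIdeal n F)
      (Y0 n k ^ (n + 1) * ρ n k (Asub n F (T.erase j)).det *
        (∏ i ∈ T.erase j, Xb n k i) * ∏ i ∈ (T.erase j)ᶜ, ρ n k (pderiv i F)) := by
  classical
  set R := MvPolynomial (Unit ⊕ Fin (n + 1)) k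
  set ψ : R →+* MvPolynomial (Unit ⊕ Fin (n + 1)) k ⧸ JtildeIdeal n F :=
    Ideal.Quotient.mk (JtildeIdeal n F) with hψ
  have hjt : 1 ≤ T.card := Finset.card_pos.mpr ⟨j, hj⟩
  have hT1 : T.card ≤ n + 1 := by
    simpa using Finset.card_le_univ T
  set jT : {x // x ∈ T} := ⟨j, hj⟩ with hjT
  set B1 : Matrix {x // x ∈ T} {x // x ∈ T} (MvPolynomial (Fin (n + 1)) k) :=
    (Asub n F T).updateCol jT (fun i => pderiv (i : Fin (n + 1)) F) with hB1
  set wf : Fin (n + 1) → R := fun x => if x = j then Y0 n k else Y0 n k * Xb n k x with hwf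
  set MR : Matrix {x // x ∈ T} {x // x ∈ T} R :=
    Matrix.of fun i l => wf (i : Fin (n + 1)) * ρ n k (B1 i l) with hMR
  -- the product of the row multipliers
  have hprodw : ∏ i : {x // x ∈ T}, wf (i : Fin (n + 1))
      = Y0 n k ^ T.card * ∏ i ∈ T.erase j, Xb n k i := by
    rw [Finset.prod_coe_sort T (fun x => wf x)]
    have hcongr : ∀ x ∈ T, wf x = Y0 n k * (if x = j then 1 else Xb n k x) := by
      intro x _
      by_cases hx : x = j
      · simp [hwf, hx]
      · simp [hwf, hx]
    rw [Finset.prod_congr rfl hcongr, Finset.prod_mul_distrib, Finset.prod_const]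
    congr 1
    rw [← Finset.mul_prod_erase T _ hj, if_pos rfl, one_mul]
    exact Finset.prod_congr rfl fun x hx => by rw [if_neg (Finset.ne_of_mem_erase hx)]
  -- determinant of MR in R
  have hdetMR : MR.det = (Y0 n k ^ T.card * ∏ i ∈ T.erase j, Xb n k i) * ρ n k B1.det := by
    have h1 : MR = Matrix.of fun (i l : {x // x ∈ T}) =>
        wf (i : Fin (n + 1)) * (B1.map (ρ n k)) i l := rfl
    rw [h1, Matrix.det_mul_column, hprodw]
    congr 1
    exact ((ρ n k).map_det B1).symm
  -- the matrix over the quotient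
  have hCQ : MR.map ψ = (MR.map ψ).updateCol jT
      (Pi.single jT (ψ (Y0 n k * ρ n k (pderiv j F)))) := by
    ext i l
    rcases eq_or_ne l jT with rfl | hl
    · rw [Matrix.updateCol_self, Pi.single_apply]
      rcases eq_or_ne i jT with rfl | hi
      · rw [if_pos rfl]
        show ψ (MR jT jT) = _
        have h2 : MR jT jT = Y0 n k * ρ n k (pderiv j F) := by
          show wf j * ρ n k (B1 jT jT) = _
          rw [hB1, Matrix.updateCol_self, hwf]
          simp
          exact Or.inl rfl
        rw [h2]
      · rw [if_neg hi]
        show ψ (MR i jT) = 0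
        have hij : (i : Fin (n + 1)) ≠ j := fun h => hi (Subtype.ext h)
        have h3 : MR i jT
            = Y0 n k * Xb n k (i : Fin (n + 1)) * ρ n k (pderiv (i : Fin (n + 1)) F) := by
          show wf (i : Fin (n + 1)) * ρ n k (B1 i jT) = _
          rw [hB1, Matrix.updateCol_self, hwf]
          simp [hij]
        rw [h3, hψ, Ideal.Quotient.eq_zero_iff_mem]
        exact Ideal.subset_span (Set.mem_union_right _ ⟨(i : Fin (n + 1)), rfl⟩)
    · rw [Matrix.updateCol_ne hl]
  -- the equivalence between the two index types
  let e2 : {i : {x // x ∈ T} // i ≠ jT} ≃ {x // x ∈ T.erase j} :=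
    { toFun := fun i => ⟨(i : {x // x ∈ T}), Finset.mem_erase.mpr
        ⟨fun h => i.prop (Subtype.ext h), (i : {x // x ∈ T}).prop⟩⟩
      invFun := fun x => ⟨⟨(x : Fin (n + 1)), (Finset.mem_erase.mp x.prop).2⟩,
        fun h => (Finset.mem_erase.mp x.prop).1 (congrArg Subtype.val h)⟩
      left_inv := fun i => by ext; rfl
      right_inv := fun x => by ext; rfl }
  -- the minor of MR over the quotient
  have hsub : (MR.map ψ).submatrix
        (fun i : {i : {x // x ∈ T} // i ≠ jT} => (i : {x // x ∈ T}))
        (fun i : {i : {x // x ∈ T} // i ≠ jT} => (i : {x // x ∈ T}))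
      = (Matrix.of fun (i l : {i : {x // x ∈ T} // i ≠ jT}) =>
          (Y0 n k * Xb n k ((i : {x // x ∈ T}) : Fin (n + 1))) *
            ((Asub n F (T.erase j)).submatrix e2 e2).map (ρ n k) i l).map ψ := by
    ext i l
    show ψ (MR (i : {x // x ∈ T}) (l : {x // x ∈ T})) = ψ _
    congr 1
    show wf ((i : {x // x ∈ T}) : Fin (n + 1)) * ρ n k (B1 (i : _) (l : _)) = _
    have hii : ((i : {x // x ∈ T}) : Fin (n + 1)) ≠ j := by
      intro h
      exact i.prop (Subtype.ext h)
    rw [hB1, Matrix.updateCol_ne l.prop, hwf]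
    simp only [if_neg hii]
    rfl
  have hminor : ((MR.map ψ).submatrix
        (fun i : {i : {x // x ∈ T} // i ≠ jT} => (i : {x // x ∈ T}))
        (fun i : {i : {x // x ∈ T} // i ≠ jT} => (i : {x // x ∈ T}))).det
      = ψ ((Y0 n k ^ (T.erase j).card * ∏ i ∈ T.erase j, Xb n k i) *
          ρ n k (Asub n F (T.erase j)).det) := by
    rw [hsub, ← RingHom.mapMatrix_apply, ← RingHom.map_det]
    congr 1
    have h4 : (Matrix.of fun (i l : {i : {x // x ∈ T} // i ≠ jT}) =>
          (Y0 n k * Xb n k ((i : {x // x ∈ T}) : Fin (n + 1))) *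
            ((Asub n F (T.erase j)).submatrix e2 e2).map (ρ n k) i l).det
        = (∏ i : {i : {x // x ∈ T} // i ≠ jT},
            (Y0 n k * Xb n k ((i : {x // x ∈ T}) : Fin (n + 1)))) *
          (((Asub n F (T.erase j)).submatrix e2 e2).map (ρ n k)).det :=
      Matrix.det_mul_column _ _
    rw [h4]
    congr 1
    · -- the product of row multipliers over the subtype
      have h5 : ∏ i : {i : {x // x ∈ T} // i ≠ jT},
            (Y0 n k * Xb n k ((i : {x // x ∈ T}) : Fin (n + 1)))
          = ∏ x : {x // x ∈ T.erase j}, (Y0 n k * Xb n k (x : Fin (n + 1))) :=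
        Equiv.prod_comp e2 (fun x => Y0 n k * Xb n k (x : Fin (n + 1)))
      rw [h5, Finset.prod_coe_sort (T.erase j) (fun x => Y0 n k * Xb n k x),
        Finset.prod_mul_distrib, Finset.prod_const]
    · rw [← Matrix.det_submatrix_equiv_self e2 (Asub n F (T.erase j)), AlgHom.map_det]
      rfl
  -- putting the determinant computation together
  have hmain : ψ ((Y0 n k ^ T.card * ∏ i ∈ T.erase j, Xb n k i) * ρ n k B1.det)
      = ψ ((Y0 n k * ρ n k (pderiv j F)) *
          ((Y0 n k ^ (T.erase j).card * ∏ i ∈ T.erase j, Xb n k i) *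
            ρ n k (Asub n F (T.erase j)).det)) := by
    have h6 : ψ MR.det = (MR.map ψ).det := by
      rw [RingHom.map_det, RingHom.mapMatrix_apply]
    rw [← hdetMR, h6, hCQ]
    have h7 : (Pi.single jT (ψ (Y0 n k * ρ n k (pderiv j F))) :
          {x // x ∈ T} → MvPolynomial (Unit ⊕ Fin (n + 1)) k ⧸ JtildeIdeal n F)
        = ψ (Y0 n k * ρ n k (pderiv j F)) • (Pi.single jT 1 :
          {x // x ∈ T} → MvPolynomial (Unit ⊕ Fin (n + 1)) k ⧸ JtildeIdeal n F) := by
      funext x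
      rcases eq_or_ne x jT with rfl | hx
      · simp
      · simp [Pi.single_apply, hx]
    rw [h7, Matrix.det_updateCol_smul, det_single_col, hminor, ← map_mul]
  -- multiply by the remaining factors
  have h8 := congrArg (· * ψ (Y0 n k ^ (n + 1 - T.card) * ∏ i ∈ Tᶜ, ρ n k (pderiv i F))) hmain
  simp only [← map_mul] at h8
  have hjc : j ∉ Tᶜ := by simp [Finset.mem_compl, hj]
  calc ψ (Y0 n k ^ (n + 1) * ρ n k B1.det * (∏ i ∈ T.erase j, Xb n k i) *
        ∏ i ∈ Tᶜ, ρ n k (pderiv i F))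
      = ψ ((Y0 n k ^ T.card * ∏ i ∈ T.erase j, Xb n k i) * ρ n k B1.det *
          (Y0 n k ^ (n + 1 - T.card) * ∏ i ∈ Tᶜ, ρ n k (pderiv i F))) := by
        congr 1
        rw [show Y0 n k ^ (n + 1) = Y0 n k ^ (n + 1 - T.card) * Y0 n k ^ T.card by
          rw [← pow_add, Nat.sub_add_cancel hT1]]
        ring
    _ = ψ ((Y0 n k * ρ n k (pderiv j F)) *
          ((Y0 n k ^ (T.erase j).card * ∏ i ∈ T.erase j, Xb n k i) *
            ρ n k (Asub n F (T.erase j)).det) *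
          (Y0 n k ^ (n + 1 - T.card) * ∏ i ∈ Tᶜ, ρ n k (pderiv i F))) := h8
    _ = ψ (Y0 n k ^ (n + 1) * ρ n k (Asub n F (T.erase j)).det *
          (∏ i ∈ T.erase j, Xb n k i) * ∏ i ∈ (T.erase j)ᶜ, ρ n k (pderiv i F)) := by
        refine congrArg ψ ?_
        rw [Finset.compl_erase, Finset.prod_insert hjc, Finset.card_erase_of_mem hj]
        rw [show Y0 n k ^ (n + 1)
            = Y0 n k ^ (n + 1 - T.card) * (Y0 n k * Y0 n k ^ (T.card - 1)) by
          rw [← pow_succ', ← pow_add]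
          congr 1
          omega]
        ring

/-- the key one-step reduction -/
lemma step (hm : 2 ≤ m) (hhom : F.IsHomogeneous m)
    (T : Finset (Fin (n + 1))) {j : Fin (n + 1)} (hj : j ∈ T) :
    Ideal.Quotient.mk (JtildeIdeal n F)
      (Y0 n k ^ (n + 1) * ρ n k (Asub n F T).det * (∏ i ∈ T, Xb n k i) *
        ∏ i ∈ Tᶜ, ρ n k (pderiv i F))
  = Ideal.Quotient.mk (JtildeIdeal n F)
      (C ((m : k) - 1) * Y0 n k ^ (n + 1) * ρ n k (Asub n F (T.erase j)).det *
        (∏ i ∈ T.erase j, Xb n k i) * ∏ i ∈ (T.erase j)ᶜ, ρ n k (pderiv i F)) := by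
  classical
  have hm1 : 1 ≤ m := le_trans one_le_two hm
  set ψ : MvPolynomial (Unit ⊕ Fin (n + 1)) k →+*
      MvPolynomial (Unit ⊕ Fin (n + 1)) k ⧸ JtildeIdeal n F :=
    (Ideal.Quotient.mk (JtildeIdeal n F) :
      MvPolynomial (Unit ⊕ Fin (n + 1)) k →+* _) with hψ
  show ψ _ = ψ _
  set jT : {x // x ∈ T} := ⟨j, hj⟩ with hjT
  set A : Matrix {x // x ∈ T} {x // x ∈ T} (MvPolynomial (Fin (n + 1)) k) :=
    Asub n F T with hA
  -- Euler identity for the rows of the Hessian, restricted to T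
  have hcol : ∀ i : {x // x ∈ T},
      (∑ l : {x // x ∈ T}, (X (l : Fin (n + 1)) : MvPolynomial (Fin (n + 1)) k) • A i l)
      = (m - 1) • pderiv (i : Fin (n + 1)) F
        - ∑ l ∈ Tᶜ, X l * hess n F (i : Fin (n + 1)) l := by
    intro i
    have h1 : ∑ l : {x // x ∈ T},
          (X (l : Fin (n + 1)) : MvPolynomial (Fin (n + 1)) k) • A i l
        = ∑ l ∈ T, (X l : MvPolynomial (Fin (n + 1)) k) * hess n F (i : Fin (n + 1)) l :=
      Finset.sum_coe_sort T
        (fun l => (X l : MvPolynomial (Fin (n + 1)) k) * hess n F (i : Fin (n + 1)) l)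
    have h2 : (∑ l ∈ T, (X l : MvPolynomial (Fin (n + 1)) k) * hess n F (i : Fin (n + 1)) l)
        + ∑ l ∈ Tᶜ, X l * hess n F (i : Fin (n + 1)) l
        = (m - 1) • pderiv (i : Fin (n + 1)) F := by
      rw [Finset.sum_add_sum_compl]
      exact euler_hess_row hm1 hhom (i : Fin (n + 1))
    rw [h1]
    exact eq_sub_of_add_eq h2
  have hdet1 : (A.updateCol jT (fun i => ∑ l : {x // x ∈ T},
        (X (l : Fin (n + 1)) : MvPolynomial (Fin (n + 1)) k) • A i l)).det
      = (X j : MvPolynomial (Fin (n + 1)) k) • A.det :=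
    Matrix.det_updateCol_sum A jT (fun l => X (l : Fin (n + 1)))
  have hcolfun : (fun i : {x // x ∈ T} => ∑ l : {x // x ∈ T},
        (X (l : Fin (n + 1)) : MvPolynomial (Fin (n + 1)) k) • A i l)
      = ((m - 1) • fun i : {x // x ∈ T} => pderiv (i : Fin (n + 1)) F)
        - ∑ l ∈ Tᶜ, (X l : MvPolynomial (Fin (n + 1)) k) •
            (fun i : {x // x ∈ T} => hess n F (i : Fin (n + 1)) l) := by
    funext i
    rw [Pi.sub_apply, hcol i]
    congr 1
    rw [Finset.sum_apply]
    exact Finset.sum_congr rfl fun l _ => rfl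
  have hcr : ∀ v : {x // x ∈ T} → MvPolynomial (Fin (n + 1)) k,
      (A.updateCol jT v).det = Matrix.cramer A v jT := fun v => rfl
  have keyP : (X j : MvPolynomial (Fin (n + 1)) k) • A.det
      = (m - 1) • (A.updateCol jT (fun i => pderiv (i : Fin (n + 1)) F)).det
        - ∑ l ∈ Tᶜ, (X l : MvPolynomial (Fin (n + 1)) k) *
            (A.updateCol jT (fun i => hess n F (i : Fin (n + 1)) l)).det := by
    rw [← hdet1, hcr, hcolfun, map_sub, map_nsmul, map_sum]
    simp_rw [LinearMap.map_smul]
    rw [Pi.sub_apply, Pi.smul_apply, Finset.sum_apply]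
    simp only [Pi.smul_apply, smul_eq_mul, Matrix.cramer_apply]
  -- transport to the big ring
  have hX : ∀ l : Fin (n + 1), ρ n k (X l) = Xb n k l := fun l => rename_X _ l
  have hR : Xb n k j * ρ n k A.det
      = (m - 1) • ρ n k (A.updateCol jT (fun i => pderiv (i : Fin (n + 1)) F)).det
        - ∑ l ∈ Tᶜ, Xb n k l * ρ n k
            (A.updateCol jT (fun i => hess n F (i : Fin (n + 1)) l)).det := by
    have h5 := congrArg (ρ n k) keyP
    rw [smul_eq_mul, map_mul, map_sub, map_nsmul, map_sum] at h5
    simp_rw [map_mul, hX] at h5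
    exact h5
  -- the vanishing of the extra terms
  have hvan : ∀ l ∈ Tᶜ, ψ ((Xb n k l * ρ n k
        (A.updateCol jT (fun i => hess n F (i : Fin (n + 1)) l)).det) *
        (Y0 n k ^ (n + 1) * (∏ i ∈ T.erase j, Xb n k i) * ∏ i ∈ Tᶜ, ρ n k (pderiv i F))) = 0 := by
    intro l hl
    have hE : (Xb n k l * ρ n k
        (A.updateCol jT (fun i => hess n F (i : Fin (n + 1)) l)).det) *
        (Y0 n k ^ (n + 1) * (∏ i ∈ T.erase j, Xb n k i) * ∏ i ∈ Tᶜ, ρ n k (pderiv i F))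
        = Y0 n k * Xb n k l * ρ n k (pderiv l F) *
          (Y0 n k ^ n * ρ n k
            (A.updateCol jT (fun i => hess n F (i : Fin (n + 1)) l)).det *
            (∏ i ∈ T.erase j, Xb n k i) * ∏ i ∈ Tᶜ.erase l, ρ n k (pderiv i F)) := by
      rw [← Finset.mul_prod_erase Tᶜ _ hl, pow_succ]
      ring
    rw [hE, hψ, Ideal.Quotient.eq_zero_iff_mem]
    exact gen_mem n F l _
  calc ψ (Y0 n k ^ (n + 1) * ρ n k A.det * (∏ i ∈ T, Xb n k i) *
        ∏ i ∈ Tᶜ, ρ n k (pderiv i F))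
      = ψ ((Xb n k j * ρ n k A.det) * (Y0 n k ^ (n + 1) *
          (∏ i ∈ T.erase j, Xb n k i) * ∏ i ∈ Tᶜ, ρ n k (pderiv i F))) := by
        congr 1
        rw [← Finset.mul_prod_erase T _ hj]
        ring
    _ = ψ ((m - 1) • (ρ n k (A.updateCol jT (fun i => pderiv (i : Fin (n + 1)) F)).det *
            (Y0 n k ^ (n + 1) * (∏ i ∈ T.erase j, Xb n k i) *
              ∏ i ∈ Tᶜ, ρ n k (pderiv i F))))
        - ∑ l ∈ Tᶜ, ψ ((Xb n k l * ρ n k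
            (A.updateCol jT (fun i => hess n F (i : Fin (n + 1)) l)).det) *
            (Y0 n k ^ (n + 1) * (∏ i ∈ T.erase j, Xb n k i) *
              ∏ i ∈ Tᶜ, ρ n k (pderiv i F))) := by
        rw [hR, sub_mul, Finset.sum_mul, map_sub, map_sum, smul_mul_assoc]
    _ = (m - 1) • ψ (Y0 n k ^ (n + 1) *
          ρ n k (A.updateCol jT (fun i => pderiv (i : Fin (n + 1)) F)).det *
          (∏ i ∈ T.erase j, Xb n k i) * ∏ i ∈ Tᶜ, ρ n k (pderiv i F)) := by
        rw [Finset.sum_eq_zero hvan, sub_zero, map_nsmul]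
        congr 2
        ring
    _ = (m - 1) • ψ (Y0 n k ^ (n + 1) * ρ n k (Asub n F (T.erase j)).det *
          (∏ i ∈ T.erase j, Xb n k i) * ∏ i ∈ (T.erase j)ᶜ, ρ n k (pderiv i F)) := by
        rw [hψ]
        rw [quot_det_step n F T hj]
    _ = ψ (C ((m : k) - 1) * Y0 n k ^ (n + 1) * ρ n k (Asub n F (T.erase j)).det *
          (∏ i ∈ T.erase j, Xb n k i) * ∏ i ∈ (T.erase j)ᶜ, ρ n k (pderiv i F)) := by
        have h9 : ((m - 1 : ℕ) : k) = (m : k) - 1 := by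
          rw [Nat.cast_sub hm1, Nat.cast_one]
        have hCm : (C ((m : k) - 1) : MvPolynomial (Unit ⊕ Fin (n + 1)) k)
            = ((m - 1 : ℕ) : MvPolynomial (Unit ⊕ Fin (n + 1)) k) := by
          rw [← h9]
          exact C_eq_coe_nat (m - 1)
        rw [nsmul_eq_mul, ← map_natCast ψ (m - 1), ← hCm, ← map_mul]
        congr 1
        ring

/-- iterated reduction -/
lemma main_ind (hm : 2 ≤ m) (hhom : F.IsHomogeneous m) (U : Finset (Fin (n + 1))) :
    Ideal.Quotient.mk (JtildeIdeal n F)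
      (C ((m : k) - 1) ^ U.card * Y0 n k ^ (n + 1) * ρ n k (Asub n F Uᶜ).det *
        (∏ i ∈ Uᶜ, Xb n k i) * ∏ i ∈ U, ρ n k (pderiv i F))
  = Ideal.Quotient.mk (JtildeIdeal n F)
      (Y0 n k ^ (n + 1) * ρ n k (hess n F).det * ∏ i, Xb n k i) := by
  classical
  induction U using Finset.induction_on with
  | empty =>
    have hA : (Asub n F (Finset.univ : Finset (Fin (n + 1)))).det = (hess n F).det := by
      have he : Asub n F (Finset.univ : Finset (Fin (n + 1)))
          = (hess n F).submatrix (Equiv.subtypeUnivEquiv (fun x => Finset.mem_univ x))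
              (Equiv.subtypeUnivEquiv (fun x => Finset.mem_univ x)) := by
        ext a b
        rfl
      rw [he, Matrix.det_submatrix_equiv_self]
    rw [Finset.card_empty, pow_zero, one_mul, Finset.compl_empty, Finset.prod_empty, mul_one,
      hA]
  | @insert j U hjU ih =>
    have hjUc : j ∈ Uᶜ := Finset.mem_compl.mpr hjU
    have hstep := step n m F hm hhom Uᶜ hjUc
    rw [compl_compl] at hstep
    have hrw : ((Uᶜ).erase j)ᶜ = insert j U := by rw [Finset.compl_erase, compl_compl]
    rw [hrw] at hstep
    rw [Finset.compl_insert, Finset.card_insert_of_notMem hjU, pow_succ]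
    calc Ideal.Quotient.mk (JtildeIdeal n F)
          (C ((m : k) - 1) ^ U.card * C ((m : k) - 1) * Y0 n k ^ (n + 1) *
            ρ n k (Asub n F ((Uᶜ).erase j)).det * (∏ i ∈ (Uᶜ).erase j, Xb n k i) *
            ∏ i ∈ insert j U, ρ n k (pderiv i F))
      _ = Ideal.Quotient.mk (JtildeIdeal n F) (C ((m : k) - 1) ^ U.card) *
          Ideal.Quotient.mk (JtildeIdeal n F)
            (C ((m : k) - 1) * Y0 n k ^ (n + 1) * ρ n k (Asub n F ((Uᶜ).erase j)).det *
              (∏ i ∈ (Uᶜ).erase j, Xb n k i) * ∏ i ∈ insert j U, ρ n k (pderiv i F)) := by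
          rw [← map_mul]
          congr 1
          ring
      _ = Ideal.Quotient.mk (JtildeIdeal n F) (C ((m : k) - 1) ^ U.card) *
          Ideal.Quotient.mk (JtildeIdeal n F)
            (Y0 n k ^ (n + 1) * ρ n k (Asub n F Uᶜ).det * (∏ i ∈ Uᶜ, Xb n k i) *
              ∏ i ∈ U, ρ n k (pderiv i F)) := by rw [← hstep]
      _ = Ideal.Quotient.mk (JtildeIdeal n F)
            (C ((m : k) - 1) ^ U.card * Y0 n k ^ (n + 1) * ρ n k (Asub n F Uᶜ).det *
              (∏ i ∈ Uᶜ, Xb n k i) * ∏ i ∈ U, ρ n k (pderiv i F)) := by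
          rw [← map_mul]
          congr 1
          ring
      _ = Ideal.Quotient.mk (JtildeIdeal n F)
            (Y0 n k ^ (n + 1) * ρ n k (hess n F).det * ∏ i, Xb n k i) := ih

end step

/-- In `J̃ = k[Y_0,X_0,…,X_n]/(Y_0F, Y_0X_0F_0,…,Y_0X_nF_n)` (char 0, `F` homogeneous of
degree `m ≥ 2` defining a smooth hypersurface), for any subset `S = {j_0,…,j_r}` of
cardinality `r+1` one has
`Y_0^{n+1}·det(Hess(F))_S·∏_{i∉S}X_i·∏_{i∈S}F_i = Y_0^{n+1}·(det Hess(F)/(m−1)^{r+1})·∏_i X_i`,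
where `det(Hess(F))_S` is the minor of the Hessian with rows and columns in `S` removed. -/
theorem hessian_minor_identity (n m r : ℕ) [CharZero k] (hm : 2 ≤ m)
    (F : MvPolynomial (Fin (n + 1)) k) (hhom : F.IsHomogeneous m)
    (hsmooth : ∀ x : Fin (n + 1) → k, x ≠ 0 → ¬ ∀ i, eval x (pderiv i F) = 0)
    (S : Finset (Fin (n + 1))) (hScard : S.card = r + 1)
    (hc : (Sᶜ : Finset (Fin (n + 1))).card = n - r) :
    Ideal.Quotient.mk (JtildeIdeal n F)
        (Y0 n k ^ (n + 1) *
          ρ n k (((hess n F).submatrix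
              (fun p : Fin (n - r) => ((Sᶜ : Finset (Fin (n + 1))).orderEmbOfFin hc) p)
              (fun p : Fin (n - r) => ((Sᶜ : Finset (Fin (n + 1))).orderEmbOfFin hc) p)).det) *
          (∏ i ∈ (Sᶜ : Finset (Fin (n + 1))), Xb n k i) *
          ∏ i ∈ S, ρ n k (pderiv i F)) =
      Ideal.Quotient.mk (JtildeIdeal n F)
        (C ((((m : k) - 1)⁻¹) ^ (r + 1)) * Y0 n k ^ (n + 1) *
          ρ n k (hess n F).det * ∏ i, Xb n k i) := by
  classical
  have hm1 : 1 ≤ m := le_trans one_le_two hm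
  have hmain := main_ind n m F hm hhom S
  rw [hScard] at hmain
  have hdet : ((hess n F).submatrix
      (fun p : Fin (n - r) => ((Sᶜ : Finset (Fin (n + 1))).orderEmbOfFin hc) p)
      (fun p : Fin (n - r) => ((Sᶜ : Finset (Fin (n + 1))).orderEmbOfFin hc) p)).det
      = (Asub n F Sᶜ).det :=
    Matrix.det_submatrix_equiv_self ((Sᶜ : Finset (Fin (n + 1))).orderIsoOfFin hc).toEquiv
      (Asub n F Sᶜ)
  rw [hdet]
  have hne : ((m : k) - 1) ≠ 0 := by
    have h0 : ((m - 1 : ℕ) : k) ≠ 0 := Nat.cast_ne_zero.mpr (by omega)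
    rwa [Nat.cast_sub hm1, Nat.cast_one] at h0
  have hunit : (C (((m : k) - 1)⁻¹) ^ (r + 1) : MvPolynomial (Unit ⊕ Fin (n + 1)) k) *
      C ((m : k) - 1) ^ (r + 1) = 1 := by
    rw [← mul_pow, ← C_mul, inv_mul_cancel₀ hne, C_1, one_pow]
  calc Ideal.Quotient.mk (JtildeIdeal n F)
        (Y0 n k ^ (n + 1) * ρ n k (Asub n F Sᶜ).det *
          (∏ i ∈ (Sᶜ : Finset (Fin (n + 1))), Xb n k i) * ∏ i ∈ S, ρ n k (pderiv i F))
    _ = Ideal.Quotient.mk (JtildeIdeal n F) (C (((m : k) - 1)⁻¹) ^ (r + 1)) *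
        Ideal.Quotient.mk (JtildeIdeal n F)
          (C ((m : k) - 1) ^ (r + 1) * Y0 n k ^ (n + 1) * ρ n k (Asub n F Sᶜ).det *
            (∏ i ∈ (Sᶜ : Finset (Fin (n + 1))), Xb n k i) * ∏ i ∈ S, ρ n k (pderiv i F)) := by
        rw [← map_mul]
        congr 1
        rw [show C (((m : k) - 1)⁻¹) ^ (r + 1) *
            (C ((m : k) - 1) ^ (r + 1) * Y0 n k ^ (n + 1) * ρ n k (Asub n F Sᶜ).det *
              (∏ i ∈ (Sᶜ : Finset (Fin (n + 1))), Xb n k i) * ∏ i ∈ S, ρ n k (pderiv i F))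
            = (C (((m : k) - 1)⁻¹) ^ (r + 1) * C ((m : k) - 1) ^ (r + 1)) *
              (Y0 n k ^ (n + 1) * ρ n k (Asub n F Sᶜ).det *
                (∏ i ∈ (Sᶜ : Finset (Fin (n + 1))), Xb n k i) *
                ∏ i ∈ S, ρ n k (pderiv i F)) from by ring]
        rw [hunit, one_mul]
    _ = Ideal.Quotient.mk (JtildeIdeal n F) (C (((m : k) - 1)⁻¹) ^ (r + 1)) *
        Ideal.Quotient.mk (JtildeIdeal n F)
          (Y0 n k ^ (n + 1) * ρ n k (hess n F).det * ∏ i, Xb n k i) := by rw [hmain]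
    _ = Ideal.Quotient.mk (JtildeIdeal n F)
          (C ((((m : k) - 1)⁻¹) ^ (r + 1)) * Y0 n k ^ (n + 1) *
            ρ n k (hess n F).det * ∏ i, Xb n k i) := by
        rw [← map_mul, C_pow]
        congr 1
        ring

end HessianRing
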